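/- Let I be a monomial ideal of K[x₁,...,x_n] generated in degree 2. Then I is quasi-linear if and only if the induced matching number of the associated graph G_I equals 1. -/

import Mathlib

open MvPolynomial

/-- The monomial `x^u` in the polynomial ring `K[x_i : i ∈ σ]`. -/
noncomputable def mon (K : Type) [Field K] {σ : Type} (u : σ →₀ ℕ) :
    MvPolynomial σ K := MvPolynomial.monomial u 1

/-- Total degree of an exponent vector. -/
def mdeg {σ : Type} (u : σ →₀ ℕ) : ℕ := u.sum fun _ e => e

/-- The monomial ideal generated by the monomials with exponent vectors in `S`. -/
noncomputable def monIdeal (K : Type) [Field K] {σ : Type} (S : Set (σ →₀ ℕ)) :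
    Ideal (MvPolynomial σ K) := Ideal.span ((mon K) '' S)

/-- An ideal is generated by variables. -/
def genByVars {K : Type} [Field K] {σ : Type} (J : Ideal (MvPolynomial σ K)) : Prop :=
  ∃ A : Set σ, J = Ideal.span ((fun i => (X i : MvPolynomial σ K)) '' A)

/-- An ideal is generated by linear forms. -/
def genByLinForms {K : Type} [Field K] {σ : Type} (J : Ideal (MvPolynomial σ K)) : Prop :=
  ∃ S : Set (MvPolynomial σ K), (∀ f ∈ S, f.IsHomogeneous 1) ∧ J = Ideal.span S

/-- `S` is an antichain under divisibility of monomials, i.e. it is the minimal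
monomial generating set `G(I)` of the monomial ideal `I` it generates. -/
def IsMinGenSet {σ : Type} (S : Set (σ →₀ ℕ)) : Prop :=
  ∀ u ∈ S, ∀ v ∈ S, u ≤ v → u = v

/-- A monomial ideal, presented by its minimal monomial generating set `S`, is
quasi-linear if for every `u ∈ S` the colon ideal `(G(I) \ {u}) : u` is generated
by variables. -/
def QuasiLinear (K : Type) [Field K] {σ : Type} (S : Set (σ →₀ ℕ)) : Prop :=
  ∀ u ∈ S, genByVars (Submodule.colon (monIdeal K (S \ {u})) (Ideal.span {mon K u}))

/-- A minimal graded free resolution of an ideal `I` in a polynomial ring: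
graded free modules `F i = ⊕_k R(-dg i k)` of rank `b i`, differentials
`F (i+1) → F i` given by the matrices `A i`, whose entries are homogeneous of the
appropriate degree and of positive degree (this is minimality, i.e. all entries lie
in the graded maximal ideal), together with an augmentation `F 0 → I` given by the
homogeneous generators `g`, everything being exact. -/
structure MinFreeRes {K : Type} [Field K] {σ : Type} (I : Ideal (MvPolynomial σ K)) where
  b : ℕ → ℕ
  dg : (i : ℕ) → Fin (b i) → ℕ
  g : Fin (b 0) → MvPolynomial σ K
  A : (i : ℕ) → Matrix (Fin (b i)) (Fin (b (i+1))) (MvPolynomial σ K)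
  g_hom : ∀ k, (g k).IsHomogeneous (dg 0 k)
  A_hom : ∀ i k l, A i k l = 0 ∨
    ((A i k l).IsHomogeneous (dg (i+1) l - dg i k) ∧ dg i k < dg (i+1) l)
  aug_range : LinearMap.range (Fintype.linearCombination (MvPolynomial σ K)
      g) = I
  aug_exact : LinearMap.ker (Fintype.linearCombination (MvPolynomial σ K)
      g) = LinearMap.range ((A 0).mulVecLin)
  is_exact : ∀ i, LinearMap.ker ((A i).mulVecLin) = LinearMap.range ((A (i+1)).mulVecLin)

/-- The graded Betti number `β_{i,j}` read off from a minimal graded free resolution: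
the number of generators of the `i`-th free module of degree `j`. -/
noncomputable def MinFreeRes.beta {K : Type} [Field K] {σ : Type}
    {I : Ideal (MvPolynomial σ K)} (res : MinFreeRes I) (i j : ℕ) : ℕ :=
  (Finset.univ.filter fun k => res.dg i k = j).card

/-- `I` has a `d`-linear resolution: it has a minimal graded free resolution in which the
`i`-th free module is generated entirely in degree `i + d`, i.e. `β_{i,j}(I) = 0`
whenever `j - i ≠ d`. -/
def HasLinRes {K : Type} [Field K] {σ : Type} (I : Ideal (MvPolynomial σ K))
    (d : ℕ) : Prop :=
  ∃ res : MinFreeRes I, ∀ i k, res.dg i k = i + d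

/-- `reg I ≤ r`: a minimal graded free resolution of `I` has all generators of the
`i`-th free module in degrees `≤ i + r`, i.e. `β_{i,j}(I) = 0` whenever `j - i > r`. -/
def RegLE {K : Type} [Field K] {σ : Type} (I : Ideal (MvPolynomial σ K)) (r : ℕ) : Prop :=
  ∃ res : MinFreeRes I, ∀ i k, res.dg i k ≤ i + r

/-- The graph `G_I` associated to a monomial ideal generated in degree `2` with minimal
monomial generating set `S`: its vertices are `[n]` (left copy) together with the
underlined vertices `i̲` (right copy, used when `x_i² ∈ I`); `{i,j}` is an edge when
`x_i x_j ∈ I` (`i ≠ j`) and `{i, i̲}` is an edge when `x_i² ∈ I`. -/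
def assocGraph {n : ℕ} (S : Set (Fin n →₀ ℕ)) : SimpleGraph (Fin n ⊕ Fin n) :=
  SimpleGraph.fromRel (fun a b =>
    match a, b with
    | Sum.inl i, Sum.inl j => i ≠ j ∧ (Finsupp.single i 1 + Finsupp.single j 1) ∈ S
    | Sum.inl i, Sum.inr j => i = j ∧ Finsupp.single i 2 ∈ S
    | _, _ => False)

/-- The induced matching number of a graph equals `1`: the graph has an edge, but has no
induced matching of size two, i.e. no two disjoint edges with no edges between them. -/
def IndMatEqOne {V : Type} (G : SimpleGraph V) : Prop :=
  (∃ a b, G.Adj a b) ∧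
  ¬ ∃ a b c d : V, G.Adj a b ∧ G.Adj c d ∧ a ≠ c ∧ a ≠ d ∧ b ≠ c ∧ b ≠ d ∧
      ¬ G.Adj a c ∧ ¬ G.Adj a d ∧ ¬ G.Adj b c ∧ ¬ G.Adj b d


section Aux
open Finsupp

variable {K : Type} [Field K] {σ : Type}

lemma mem_monIdeal {S : Set (σ →₀ ℕ)} {f : MvPolynomial σ K} :
    f ∈ monIdeal K S ↔ ∀ m ∈ f.support, ∃ s ∈ S, s ≤ m := by
  simp only [monIdeal, mon]
  exact MvPolynomial.mem_ideal_span_monomial_image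

lemma support_mul_mon (f : MvPolynomial σ K) (u : σ →₀ ℕ) :
    (f * mon K u).support = f.support.map (addRightEmbedding u) :=
  AddMonoidAlgebra.support_coeff_mul_single f _ (by simp) _

lemma mdeg_single (i : σ) (k : ℕ) : mdeg (Finsupp.single i k) = k :=
  Finsupp.sum_single_index rfl

lemma mdeg_add (a b : σ →₀ ℕ) : mdeg (a + b) = mdeg a + mdeg b :=
  Finsupp.sum_add_index' (fun _ => rfl) (fun _ _ _ => rfl)

lemma mdeg_eq_zero {a : σ →₀ ℕ} : mdeg a = 0 ↔ a = 0 := by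
  unfold mdeg
  rw [Finsupp.sum, Finset.sum_eq_zero_iff]
  constructor
  · intro h; ext x
    by_cases hx : x ∈ a.support
    · exact h x hx
    · simpa using Finsupp.notMem_support_iff.mp hx
  · intro h; simp [h]

lemma mdeg_tsub {a b : σ →₀ ℕ} (h : a ≤ b) : mdeg b = mdeg a + mdeg (b - a) := by
  conv_lhs => rw [← tsub_add_cancel_of_le h]
  rw [mdeg_add, add_comm]

lemma mdeg_mono {a b : σ →₀ ℕ} (h : a ≤ b) : mdeg a ≤ mdeg b := by
  rw [mdeg_tsub h]; omega

lemma eq_of_le_of_mdeg_eq {a b : σ →₀ ℕ} (h : a ≤ b) (hd : mdeg a = mdeg b) : a = b := by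
  have h2 := mdeg_tsub h
  have : mdeg (b - a) = 0 := by omega
  have h3 : b - a = 0 := mdeg_eq_zero.mp this
  have h4 := tsub_add_cancel_of_le h
  rw [h3, zero_add] at h4
  exact h4

lemma eq_single_of_mdeg_one {t : σ →₀ ℕ} (h : mdeg t = 1) : ∃ i, t = Finsupp.single i 1 := by
  have hne : t ≠ 0 := by intro h0; rw [h0, mdeg_eq_zero.mpr rfl] at h; omega
  obtain ⟨i, hi⟩ := Finsupp.support_nonempty_iff.mpr hne
  have h1 : Finsupp.single i 1 ≤ t := by
    rw [Finsupp.single_le_iff]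
    exact Nat.one_le_iff_ne_zero.mpr (Finsupp.mem_support_iff.mp hi)
  exact ⟨i, (eq_of_le_of_mdeg_eq h1 (by rw [mdeg_single, h])).symm⟩

lemma exists_pair_of_mdeg_two {t : σ →₀ ℕ} (h : mdeg t = 2) :
    ∃ i j, t = Finsupp.single i 1 + Finsupp.single j 1 := by
  have hne : t ≠ 0 := by intro h0; rw [h0, mdeg_eq_zero.mpr rfl] at h; omega
  obtain ⟨i, hi⟩ := Finsupp.support_nonempty_iff.mpr hne
  have h1 : Finsupp.single i 1 ≤ t := by
    rw [Finsupp.single_le_iff]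
    exact Nat.one_le_iff_ne_zero.mpr (Finsupp.mem_support_iff.mp hi)
  have h2 : mdeg (t - Finsupp.single i 1) = 1 := by
    have := mdeg_tsub h1; rw [mdeg_single] at this; omega
  obtain ⟨j, hj⟩ := eq_single_of_mdeg_one h2
  refine ⟨i, j, ?_⟩
  have := tsub_add_cancel_of_le h1
  rw [hj] at this
  rw [← this, add_comm]

lemma colon_monIdeal (S : Set (σ →₀ ℕ)) (u : σ →₀ ℕ) :
    Submodule.colon (monIdeal K S) (Ideal.span {mon K u}) = monIdeal K ((· - u) '' S) := by
  ext f
  rw [Ideal.mem_colon_span_singleton, mem_monIdeal, mem_monIdeal, support_mul_mon]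
  constructor
  · intro h m hm
    obtain ⟨s, hs, hle⟩ := h (m + u) (Finset.mem_map.mpr ⟨m, hm, rfl⟩)
    exact ⟨s - u, ⟨s, hs, rfl⟩, tsub_le_iff_right.mpr hle⟩
  · intro h m hm
    obtain ⟨m', hm', rfl⟩ := Finset.mem_map.mp hm
    obtain ⟨t, ⟨s, hs, rfl⟩, hle⟩ := h m' hm'
    exact ⟨s, hs, tsub_le_iff_right.mp hle⟩

lemma genByVars_monIdeal {T : Set (σ →₀ ℕ)} (h0 : ∀ t ∈ T, t ≠ 0) :
    genByVars (monIdeal K T) ↔ ∀ t ∈ T, ∃ t' ∈ T, mdeg t' = 1 ∧ t' ≤ t := by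
  have hsup : ∀ t : σ →₀ ℕ, (mon K t).support = {t} := by
    intro t
    classical
    rw [mon, support_monomial, if_neg one_ne_zero]
  constructor
  · rintro ⟨A, hA⟩ t ht
    have h1 : mon K t ∈ monIdeal K T := Ideal.subset_span ⟨t, ht, rfl⟩
    rw [hA, mem_ideal_span_X_image] at h1
    obtain ⟨i, hiA, hti⟩ := h1 t (by rw [hsup]; exact Finset.mem_singleton_self t)
    have h2 : (X i : MvPolynomial σ K) ∈ monIdeal K T := by
      rw [hA]; exact Ideal.subset_span ⟨i, hiA, rfl⟩
    rw [mem_monIdeal] at h2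
    obtain ⟨t', ht'T, ht'le⟩ := h2 (Finsupp.single i 1)
      (by rw [support_X]; exact Finset.mem_singleton_self _)
    have hm1 := mdeg_mono ht'le
    rw [mdeg_single] at hm1
    have hm0 : mdeg t' ≠ 0 := fun hh => h0 t' ht'T (mdeg_eq_zero.mp hh)
    refine ⟨t', ht'T, by omega,
      le_trans ht'le (Finsupp.single_le_iff.mpr (Nat.one_le_iff_ne_zero.mpr hti))⟩
  · intro h
    refine ⟨{i | Finsupp.single i 1 ∈ T}, le_antisymm ?_ ?_⟩
    · rw [monIdeal, Ideal.span_le]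
      rintro p ⟨t, ht, rfl⟩
      obtain ⟨t', ht'T, hd, hle⟩ := h t ht
      obtain ⟨i, rfl⟩ := eq_single_of_mdeg_one hd
      rw [SetLike.mem_coe, mem_ideal_span_X_image]
      intro m hm
      rw [hsup, Finset.mem_singleton] at hm
      subst hm
      refine ⟨i, ht'T, ?_⟩
      have := Finsupp.single_le_iff.mp hle
      omega
    · rw [Ideal.span_le]
      rintro p ⟨i, hi, rfl⟩
      exact Ideal.subset_span ⟨Finsupp.single i 1, hi, rfl⟩

def QLvec {σ : Type} (S : Set (σ →₀ ℕ)) : Prop :=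
  ∀ u ∈ S, ∀ v ∈ S, v ≠ u →
    ∃ w ∈ S, w ≠ u ∧ mdeg (w - u) = 1 ∧ w - u ≤ v - u

lemma quasiLinear_iff_QLvec {S : Set (σ →₀ ℕ)} (hmin : IsMinGenSet S) :
    QuasiLinear K S ↔ QLvec S := by
  unfold QuasiLinear QLvec
  apply forall₂_congr
  intro u hu
  rw [colon_monIdeal]
  rw [genByVars_monIdeal]
  · constructor
    · rintro h v hv hvne
      obtain ⟨t', ⟨w, ⟨hwS, hwne⟩, rfl⟩, hd, hle⟩ :=
        h (v - u) ⟨v, ⟨hv, fun hh => hvne hh⟩, rfl⟩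
      exact ⟨w, hwS, fun hh => hwne hh, hd, hle⟩
    · rintro h t ⟨v, ⟨hvS, hvne⟩, rfl⟩
      obtain ⟨w, hwS, hwne, hd, hle⟩ := h v hvS (fun hh => hvne hh)
      exact ⟨w - u, ⟨w, ⟨hwS, fun hh => hwne hh⟩, rfl⟩, hd, hle⟩
  · rintro t ⟨v, ⟨hvS, hvne⟩, rfl⟩ h0
    have hle : v ≤ u := tsub_eq_zero_iff_le.mp h0
    exact hvne (hmin v hvS u hu hle)

variable {n : ℕ} {S : Set (Fin n →₀ ℕ)}

lemma adj_ll {i j : Fin n} : (assocGraph S).Adj (Sum.inl i) (Sum.inl j) ↔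
    i ≠ j ∧ Finsupp.single i 1 + Finsupp.single j 1 ∈ S := by
  rw [assocGraph, SimpleGraph.fromRel_adj]
  constructor
  · rintro ⟨hne, h | h⟩
    · exact h
    · exact ⟨Ne.symm h.1, by rw [add_comm (Finsupp.single i 1)]; exact h.2⟩
  · rintro ⟨hij, hS⟩
    exact ⟨by simp [hij], Or.inl ⟨hij, hS⟩⟩

lemma adj_lr {i j : Fin n} : (assocGraph S).Adj (Sum.inl i) (Sum.inr j) ↔
    i = j ∧ Finsupp.single i 2 ∈ S := by
  rw [assocGraph, SimpleGraph.fromRel_adj]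
  constructor
  · rintro ⟨hne, h | h⟩
    · exact h
    · exact h.elim
  · rintro ⟨hij, hS⟩
    exact ⟨by simp, Or.inl ⟨hij, hS⟩⟩

lemma adj_rl {i j : Fin n} : (assocGraph S).Adj (Sum.inr i) (Sum.inl j) ↔
    j = i ∧ Finsupp.single j 2 ∈ S := by
  rw [SimpleGraph.adj_comm]; exact adj_lr

lemma adj_rr {i j : Fin n} : ¬ (assocGraph S).Adj (Sum.inr i) (Sum.inr j) := by
  rw [assocGraph, SimpleGraph.fromRel_adj]
  rintro ⟨hne, h | h⟩ <;> exact h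

lemma single_two (i : Fin n) :
    Finsupp.single i 2 = Finsupp.single i 1 + Finsupp.single i 1 := by
  rw [← Finsupp.single_add]

lemma pair_apply (i j x : Fin n) : (Finsupp.single i 1 + Finsupp.single j 1 : Fin n →₀ ℕ) x
    = (if i = x then 1 else 0) + (if j = x then 1 else 0) := by
  simp [Finsupp.single_apply]

lemma pair_apply_eq_zero {i j x : Fin n} (h1 : i ≠ x) (h2 : j ≠ x) :
    (Finsupp.single i 1 + Finsupp.single j 1 : Fin n →₀ ℕ) x = 0 := by
  rw [pair_apply, if_neg h1, if_neg h2]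

lemma pair_apply_fst (i j : Fin n) :
    1 ≤ (Finsupp.single i 1 + Finsupp.single j 1 : Fin n →₀ ℕ) i := by
  rw [pair_apply, if_pos rfl]; omega

lemma pair_apply_snd (i j : Fin n) :
    1 ≤ (Finsupp.single i 1 + Finsupp.single j 1 : Fin n →₀ ℕ) j := by
  rw [pair_apply]; rw [if_pos rfl]; omega

lemma mem_pair_of_apply_ne {i j x : Fin n}
    (h : (Finsupp.single i 1 + Finsupp.single j 1 : Fin n →₀ ℕ) x ≠ 0) : x = i ∨ x = j := by
  rw [pair_apply] at h
  by_cases h1 : i = x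
  · exact Or.inl h1.symm
  · by_cases h2 : j = x
    · exact Or.inr h2.symm
    · rw [if_neg h1, if_neg h2] at h; omega

/-- vertex description of the edge corresponding to `x_i x_j ∈ I`. -/
def vtx2 (i j : Fin n) : Fin n ⊕ Fin n := if i = j then Sum.inr i else Sum.inl j

lemma adj_vtx2 {i j : Fin n} (h : Finsupp.single i 1 + Finsupp.single j 1 ∈ S) :
    (assocGraph S).Adj (Sum.inl i) (vtx2 i j) := by
  unfold vtx2
  split_ifs with h'
  · subst h'
    exact adj_lr.mpr ⟨rfl, by rw [single_two]; exact h⟩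
  · exact adj_ll.mpr ⟨h', h⟩

lemma vtx2_cases (i j : Fin n) :
    (vtx2 i j = Sum.inr i ∧ i = j) ∨ (vtx2 i j = Sum.inl j ∧ i ≠ j) := by
  unfold vtx2
  split_ifs with h'
  · exact Or.inl ⟨rfl, h'⟩
  · exact Or.inr ⟨rfl, h'⟩

lemma mem_of_adj {a b : Fin n ⊕ Fin n} (h : (assocGraph S).Adj a b) :
    ∃ i j, Finsupp.single i 1 + Finsupp.single j 1 ∈ S ∧
      (a = Sum.inl i ∨ b = Sum.inl i) ∧ (a = Sum.inl j ∨ b = Sum.inl j) := by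
  match a, b with
  | Sum.inl i, Sum.inl j =>
    exact ⟨i, j, (adj_ll.mp h).2, Or.inl rfl, Or.inr rfl⟩
  | Sum.inl i, Sum.inr j =>
    obtain ⟨rfl, hS⟩ := adj_lr.mp h
    exact ⟨i, i, by rw [← single_two]; exact hS, Or.inl rfl, Or.inl rfl⟩
  | Sum.inr i, Sum.inl j =>
    obtain ⟨rfl, hS⟩ := adj_rl.mp h
    exact ⟨j, j, by rw [← single_two]; exact hS, Or.inr rfl, Or.inr rfl⟩
  | Sum.inr i, Sum.inr j => exact absurd h adj_rr

lemma dir1 (hdeg : ∀ v ∈ S, mdeg v = 2) (hne : S.Nonempty) (hql : QLvec S) :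
    IndMatEqOne (assocGraph S) := by
  constructor
  · obtain ⟨u, hu⟩ := hne
    obtain ⟨i, j, rfl⟩ := exists_pair_of_mdeg_two (hdeg u hu)
    exact ⟨Sum.inl i, vtx2 i j, adj_vtx2 hu⟩
  · rintro ⟨a, b, c, d, hab, hcd, hac, had, hbc, hbd, nac, nad, nbc, nbd⟩
    obtain ⟨i, j, hu, hai, haj⟩ := mem_of_adj hab
    obtain ⟨k, l, hv, hck, hcl⟩ := mem_of_adj hcd
    have key : ∀ x y : Fin n, (a = Sum.inl x ∨ b = Sum.inl x) →
        (c = Sum.inl y ∨ d = Sum.inl y) →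
        x ≠ y ∧ Finsupp.single x 1 + Finsupp.single y 1 ∉ S := by
      intro x y hx hy
      have hne' : Sum.inl x ≠ (Sum.inl y : Fin n ⊕ Fin n) ∧
          ¬ (assocGraph S).Adj (Sum.inl x) (Sum.inl y) := by
        rcases hx with rfl | rfl <;> rcases hy with rfl | rfl
        exacts [⟨hac, nac⟩, ⟨had, nad⟩, ⟨hbc, nbc⟩, ⟨hbd, nbd⟩]
      have hxy : x ≠ y := fun hh => hne'.1 (by rw [hh])
      exact ⟨hxy, fun hS => hne'.2 (adj_ll.mpr ⟨hxy, hS⟩)⟩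
    have hik := key i k hai hck
    have hil := key i l hai hcl
    have hjk := key j k haj hck
    have hjl := key j l haj hcl
    have huk : (Finsupp.single i 1 + Finsupp.single j 1 : Fin n →₀ ℕ) k = 0 :=
      pair_apply_eq_zero hik.1 hjk.1
    have hul : (Finsupp.single i 1 + Finsupp.single j 1 : Fin n →₀ ℕ) l = 0 :=
      pair_apply_eq_zero hil.1 hjl.1
    have hvu : (Finsupp.single k 1 + Finsupp.single l 1 : Fin n →₀ ℕ) ≠
        Finsupp.single i 1 + Finsupp.single j 1 := by
      intro hh
      have h1 := DFunLike.congr_fun hh k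
      have h2 := pair_apply_fst k l
      omega
    obtain ⟨w, hwS, hwne, hwd, hwle⟩ := hql _ hu _ hv hvu
    have hvsub : (Finsupp.single k 1 + Finsupp.single l 1 : Fin n →₀ ℕ) -
        (Finsupp.single i 1 + Finsupp.single j 1) =
        Finsupp.single k 1 + Finsupp.single l 1 := by
      ext x
      rw [Finsupp.tsub_apply]
      by_cases hx : (Finsupp.single k 1 + Finsupp.single l 1 : Fin n →₀ ℕ) x = 0
      · rw [hx]; omega
      · rcases mem_pair_of_apply_ne hx with rfl | rfl
        · rw [huk]; omega
        · rw [hul]; omega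
    rw [hvsub] at hwle
    obtain ⟨m, hm⟩ := eq_single_of_mdeg_one hwd
    have hmv : 1 ≤ (Finsupp.single k 1 + Finsupp.single l 1 : Fin n →₀ ℕ) m := by
      have h1 := Finsupp.le_def.mp hwle m
      rw [hm] at h1
      simpa using h1
    have hmkl : m = k ∨ m = l := mem_pair_of_apply_ne (by omega)
    have hw2 : mdeg w = 2 := hdeg w hwS
    have hles : Finsupp.single m 1 ≤ w := hm ▸ tsub_le_self
    have hr : mdeg (w - Finsupp.single m 1) = 1 := by
      have := mdeg_tsub hles; rw [mdeg_single] at this; omega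
    obtain ⟨p, hp⟩ := eq_single_of_mdeg_one hr
    have hwdec : w = Finsupp.single p 1 + Finsupp.single m 1 := by
      have h4 := tsub_add_cancel_of_le hles
      rw [hp] at h4
      exact h4.symm
    have hum : (Finsupp.single i 1 + Finsupp.single j 1 : Fin n →₀ ℕ) m = 0 := by
      rcases hmkl with rfl | rfl
      exacts [huk, hul]
    have hup : (Finsupp.single i 1 + Finsupp.single j 1 : Fin n →₀ ℕ) p ≠ 0 := by
      intro h0
      have hww : w - (Finsupp.single i 1 + Finsupp.single j 1) = w := by
        ext x
        rw [Finsupp.tsub_apply]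
        by_cases hx : w x = 0
        · rw [hx]; omega
        · rw [hwdec] at hx
          rcases mem_pair_of_apply_ne hx with rfl | rfl
          · rw [h0]; omega
          · rw [hum]; omega
      rw [hww] at hwd
      omega
    have hpij : p = i ∨ p = j := mem_pair_of_apply_ne hup
    have hmem1 : a = Sum.inl p ∨ b = Sum.inl p := by
      rcases hpij with rfl | rfl; exacts [hai, haj]
    have hmem2 : c = Sum.inl m ∨ d = Sum.inl m := by
      rcases hmkl with rfl | rfl; exacts [hck, hcl]
    exact (key p m hmem1 hmem2).2 (hwdec ▸ hwS)

lemma dir2 (hmin : IsMinGenSet S) (hdeg : ∀ v ∈ S, mdeg v = 2)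
    (him : IndMatEqOne (assocGraph S)) : QLvec S := by
  intro u hu v hv hvne
  have hdu := hdeg u hu
  have hdv := hdeg v hv
  have hle : v - u ≤ v := tsub_le_self
  have hd2 : mdeg (v - u) ≤ 2 := hdv ▸ mdeg_mono hle
  have hd0 : mdeg (v - u) ≠ 0 := fun h =>
    hvne (hmin v hv u hu (tsub_eq_zero_iff_le.mp (mdeg_eq_zero.mp h)))
  by_cases hcase : mdeg (v - u) = 1
  · exact ⟨v, hv, hvne, hcase, le_refl _⟩
  · have hveq : v - u = v := eq_of_le_of_mdeg_eq hle (by omega)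
    have hdisj : ∀ x, v x ≠ 0 → u x = 0 := by
      intro x hx
      have h1 := DFunLike.congr_fun hveq x
      rw [Finsupp.tsub_apply] at h1
      omega
    obtain ⟨i, j, hudec⟩ := exists_pair_of_mdeg_two hdu
    obtain ⟨k, l, hvdec⟩ := exists_pair_of_mdeg_two hdv
    have hvars : ∀ p q : Fin n, (p = i ∨ p = j) → (q = k ∨ q = l) → p ≠ q := by
      intro p q hp hq hpq
      have h1 : u p ≠ 0 := by
        rw [hudec]
        rcases hp with rfl | rfl
        · have := pair_apply_fst p j; omega
        · have := pair_apply_snd i p; omega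
      have h2 : v q ≠ 0 := by
        rw [hvdec]
        rcases hq with rfl | rfl
        · have := pair_apply_fst q l; omega
        · have := pair_apply_snd k q; omega
      rw [hpq] at h1
      exact h1 (hdisj q h2)
    have hu' : (Finsupp.single i 1 + Finsupp.single j 1) ∈ S := hudec ▸ hu
    have hv' : (Finsupp.single k 1 + Finsupp.single l 1) ∈ S := hvdec ▸ hv
    have hadj1 := adj_vtx2 (S := S) hu'
    have hadj2 := adj_vtx2 (S := S) hv'
    have hcross : (assocGraph S).Adj (Sum.inl i) (Sum.inl k) ∨
        (assocGraph S).Adj (Sum.inl i) (vtx2 k l) ∨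
        (assocGraph S).Adj (vtx2 i j) (Sum.inl k) ∨
        (assocGraph S).Adj (vtx2 i j) (vtx2 k l) := by
      by_contra hno
      push_neg at hno
      apply him.2
      refine ⟨Sum.inl i, vtx2 i j, Sum.inl k, vtx2 k l, hadj1, hadj2, ?_, ?_, ?_, ?_,
        hno.1, hno.2.1, hno.2.2.1, hno.2.2.2⟩
      · intro hh; exact hvars i k (Or.inl rfl) (Or.inl rfl) (Sum.inl.inj hh)
      · rcases vtx2_cases k l with ⟨he, -⟩ | ⟨he, -⟩ <;> rw [he]
        · simp
        · intro hh; exact hvars i l (Or.inl rfl) (Or.inr rfl) (Sum.inl.inj hh)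
      · rcases vtx2_cases i j with ⟨he, -⟩ | ⟨he, -⟩ <;> rw [he]
        · simp
        · intro hh; exact hvars j k (Or.inr rfl) (Or.inl rfl) (Sum.inl.inj hh)
      · rcases vtx2_cases i j with ⟨he1, -⟩ | ⟨he1, -⟩ <;>
          rcases vtx2_cases k l with ⟨he2, -⟩ | ⟨he2, -⟩ <;> rw [he1, he2]
        · intro hh; exact hvars i k (Or.inl rfl) (Or.inl rfl) (Sum.inr.inj hh)
        · simp
        · simp
        · intro hh; exact hvars j l (Or.inr rfl) (Or.inr rfl) (Sum.inl.inj hh)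
    have hpq : ∃ p q : Fin n, (p = i ∨ p = j) ∧ (q = k ∨ q = l) ∧
        (Finsupp.single p 1 + Finsupp.single q 1) ∈ S := by
      rcases hcross with h | h | h | h
      · exact ⟨i, k, Or.inl rfl, Or.inl rfl, (adj_ll.mp h).2⟩
      · rcases vtx2_cases k l with ⟨he, -⟩ | ⟨he, -⟩ <;> rw [he] at h
        · exact absurd (adj_lr.mp h).1 (hvars i k (Or.inl rfl) (Or.inl rfl))
        · exact ⟨i, l, Or.inl rfl, Or.inr rfl, (adj_ll.mp h).2⟩
      · rcases vtx2_cases i j with ⟨he, -⟩ | ⟨he, -⟩ <;> rw [he] at h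
        · exact absurd (adj_rl.mp h).1.symm (hvars i k (Or.inl rfl) (Or.inl rfl))
        · exact ⟨j, k, Or.inr rfl, Or.inl rfl, (adj_ll.mp h).2⟩
      · rcases vtx2_cases i j with ⟨he1, -⟩ | ⟨he1, -⟩ <;>
          rcases vtx2_cases k l with ⟨he2, -⟩ | ⟨he2, -⟩ <;> rw [he1, he2] at h
        · exact absurd h adj_rr
        · exact absurd (adj_rl.mp h).1.symm (hvars i l (Or.inl rfl) (Or.inr rfl))
        · exact absurd (adj_lr.mp h).1 (hvars j k (Or.inr rfl) (Or.inl rfl))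
        · exact ⟨j, l, Or.inr rfl, Or.inr rfl, (adj_ll.mp h).2⟩
    obtain ⟨p, q, hp, hq, hwS⟩ := hpq
    have hpq' : p ≠ q := hvars p q hp hq
    have hup1 : 1 ≤ u p := by
      rw [hudec]
      rcases hp with rfl | rfl
      exacts [pair_apply_fst p j, pair_apply_snd i p]
    have hvq1 : 1 ≤ v q := by
      rw [hvdec]
      rcases hq with rfl | rfl
      exacts [pair_apply_fst q l, pair_apply_snd k q]
    have huq : u q = 0 := hdisj q (by omega)
    have hsub : (Finsupp.single p 1 + Finsupp.single q 1) - u = Finsupp.single q 1 := by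
      ext x
      rw [Finsupp.tsub_apply, Finsupp.single_apply, pair_apply]
      by_cases hxq : q = x
      · subst hxq
        rw [if_neg hpq', if_pos rfl, huq]
      · rw [if_neg hxq]
        by_cases hxp : p = x
        · subst hxp
          rw [if_pos rfl]
          omega
        · rw [if_neg hxp]
          omega
    refine ⟨Finsupp.single p 1 + Finsupp.single q 1, hwS, ?_, ?_, ?_⟩
    · intro hh
      have h1 := DFunLike.congr_fun hh q
      have h2 := pair_apply_snd p q
      omega
    · rw [hsub, mdeg_single]
    · rw [hsub, hveq]
      exact Finsupp.single_le_iff.mpr hvq1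


end Aux

/-- Let `I` be a nonzero monomial ideal generated in degree `2`, with
minimal monomial generating set `S`.  Then `I` is quasi-linear if and only if the induced
matching number of the associated graph `G_I` equals `1`. -/
theorem stmt_7 {K : Type} [Field K] {n : ℕ} (S : Set (Fin n →₀ ℕ))
    (hne : S.Nonempty) (hmin : IsMinGenSet S) (hdeg : ∀ v ∈ S, mdeg v = 2) :
    QuasiLinear K S ↔ IndMatEqOne (assocGraph S) := by
  rw [quasiLinear_iff_QLvec hmin]
  exact ⟨dir1 hdeg hne, dir2 hmin hdeg⟩
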